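/- There is no positive integer n with φ̃(n) = 13. -/

import Mathlib

set_option maxRecDepth 1000000

/-- φ̃(n): number of m with 1 ≤ m ≤ n, gcd(m,n)=1, m not prime. -/
def phiT (n : ℕ) : ℕ :=
  ((Finset.Icc 1 n).filter (fun m => Nat.gcd m n = 1 ∧ ¬ m.Prime)).card

/-- The product of the first k primes. -/
noncomputable def primorialN (k : ℕ) : ℕ := ∏ i ∈ Finset.range k, Nat.nth Nat.Prime i

/-! ### Auxiliary: lower bound for the product of primes below a prime -/

set_option maxHeartbeats 1000000 in
lemma primesBelow_base : ∀ P < 128, P.Prime → 31 ≤ P → P ^ 6 ≤ ∏ r ∈ Nat.primesBelow P, r := by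
  decide

lemma primesBelow_lb : ∀ P : ℕ, P.Prime → 31 ≤ P → P ^ 6 ≤ ∏ r ∈ Nat.primesBelow P, r := by
  intro P
  induction P using Nat.strong_induction_on with
  | _ P ih =>
    intro hP h31
    by_cases hsmall : P < 128
    · exact primesBelow_base P hsmall hP h31
    · push_neg at hsmall
      have hodd : P % 2 = 1 := by
        rcases hP.eq_two_or_odd with h | h
        · omega
        · exact h
      obtain ⟨Q, hQp, hQgt, hQle⟩ := Nat.exists_prime_lt_and_le_two_mul (P / 2) (by omega)
      have hQltP : Q < P := by omega
      have hQ31 : 31 ≤ Q := by omega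
      have hIH : Q ^ 6 ≤ ∏ r ∈ Nat.primesBelow Q, r := ih Q hQltP hQp hQ31
      have hsub : Nat.primesBelow (Q + 1) ⊆ Nat.primesBelow P := by
        intro r hr
        have h1 := Nat.prime_of_mem_primesBelow hr
        have h2 := Nat.lt_of_mem_primesBelow hr
        unfold Nat.primesBelow
        rw [Finset.mem_filter, Finset.mem_range]
        exact ⟨by omega, h1⟩
      have h1 : ∏ r ∈ Nat.primesBelow (Q + 1), r ≤ ∏ r ∈ Nat.primesBelow P, r :=
        Finset.prod_le_prod_of_subset_of_one_le' hsub
          (fun i hi _ => (Nat.prime_of_mem_primesBelow hi).one_lt.le)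
      have h2 : ∏ r ∈ Nat.primesBelow (Q + 1), r = Q * ∏ r ∈ Nat.primesBelow Q, r := by
        rw [Nat.primesBelow_succ, if_pos hQp, Finset.prod_insert (Nat.notMem_primesBelow Q)]
      have h3 : Q ^ 7 ≤ ∏ r ∈ Nat.primesBelow P, r := by
        calc Q ^ 7 = Q * Q ^ 6 := by ring
        _ ≤ Q * ∏ r ∈ Nat.primesBelow Q, r := Nat.mul_le_mul_left _ hIH
        _ = ∏ r ∈ Nat.primesBelow (Q + 1), r := h2.symm
        _ ≤ ∏ r ∈ Nat.primesBelow P, r := h1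
      have hPQ : P ≤ 2 * Q := by omega
      have h4 : 128 * P ^ 6 ≤ 128 * Q ^ 7 := by
        calc 128 * P ^ 6 ≤ P * P ^ 6 := Nat.mul_le_mul_right _ hsmall
        _ = P ^ 7 := by ring
        _ ≤ (2 * Q) ^ 7 := Nat.pow_le_pow_left hPQ 7
        _ = 128 * Q ^ 7 := by ring
      exact le_trans (Nat.le_of_mul_le_mul_left h4 (by norm_num)) h3

/-! ### Products of two distinct primes determine the factors -/

lemma mul_prime_inj {a b c d : ℕ} (ha : a.Prime) (hb : b.Prime) (hc : c.Prime) (hd : d.Prime)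
    (hab : a ≤ b) (hcd : c ≤ d) (h : a * b = c * d) : a = c ∧ b = d := by
  have h1 : a ∣ c * d := h ▸ dvd_mul_right a b
  rcases (Nat.Prime.dvd_mul ha).mp h1 with h2 | h2
  · have hac : a = c := (Nat.prime_dvd_prime_iff_eq ha hc).mp h2
    subst hac
    exact ⟨rfl, Nat.eq_of_mul_eq_mul_left ha.pos h⟩
  · have had : a = d := (Nat.prime_dvd_prime_iff_eq ha hd).mp h2
    have h3 : c ∣ a * b := h ▸ dvd_mul_right c d
    rcases (Nat.Prime.dvd_mul hc).mp h3 with h4 | h4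
    · have hca : c = a := (Nat.prime_dvd_prime_iff_eq hc ha).mp h4
      subst hca
      exact ⟨rfl, Nat.eq_of_mul_eq_mul_left hc.pos h⟩
    · have hcb : c = b := (Nat.prime_dvd_prime_iff_eq hc hb).mp h4
      have : a = c := by omega
      subst this
      exact ⟨rfl, Nat.eq_of_mul_eq_mul_left ha.pos h⟩

/-! ### The tail estimate: phiT n ≥ 14 for n ≥ 391 -/

lemma tail_ge (n : ℕ) (hn : 391 ≤ n) : 14 ≤ phiT n := by
  classical
  set pr : ℕ → Prop := fun p => p.Prime ∧ ¬ p ∣ n with hprdef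
  have hinf : (setOf pr).Infinite := by
    have hset : setOf pr = {p | p.Prime} \ {p | p ∣ n} := by
      ext p; simp [hprdef, Set.mem_diff, Set.mem_setOf_eq]; exact Iff.rfl
    rw [hset]
    refine Nat.infinite_setOf_prime.diff ?_
    refine (Set.finite_Iic n).subset ?_
    intro p hp
    exact Set.mem_Iic.mpr (Nat.le_of_dvd (by omega) hp)
  set q : ℕ → ℕ := fun i => Nat.nth pr i with hqdef
  have hq : ∀ i, (q i).Prime ∧ ¬ (q i) ∣ n := fun i => Nat.nth_mem_of_infinite hinf i
  have hmono : ∀ {i j : ℕ}, i ≤ j → q i ≤ q j := fun {i j} h => (Nat.nth_le_nth hinf).mpr h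
  have hqinj : ∀ i j, q i = q j → i = j := by
    intro i j h
    have h1 : q i ≤ q j := h.le
    have h2 : q j ≤ q i := h.ge
    have := (Nat.nth_le_nth hinf).mp h1
    have := (Nat.nth_le_nth hinf).mp h2
    omega
  have key : ∀ r, r.Prime → r < q 4 → ¬ r ∣ n → r = q 0 ∨ r = q 1 ∨ r = q 2 ∨ r = q 3 := by
    intro r hr hlt hnd
    have hpr' : pr r := ⟨hr, hnd⟩
    have hnc : Nat.nth pr (Nat.count pr r) = r := Nat.nth_count hpr'
    have hc4 : Nat.count pr r < 4 := by
      apply (Nat.nth_lt_nth hinf).mp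
      rw [hnc]
      exact hlt
    have : Nat.count pr r = 0 ∨ Nat.count pr r = 1 ∨ Nat.count pr r = 2 ∨ Nat.count pr r = 3 := by
      omega
    rcases this with h | h | h | h <;> rw [h] at hnc
    · exact Or.inl hnc.symm
    · exact Or.inr (Or.inl hnc.symm)
    · exact Or.inr (Or.inr (Or.inl hnc.symm))
    · exact Or.inr (Or.inr (Or.inr hnc.symm))
  set D : Finset ℕ := (Nat.primesBelow (q 4)).filter (fun r => r ∣ n) with hDdef
  have hDdvd : (∏ r ∈ D, r) ∣ n := by
    refine Finset.prod_primes_dvd n ?_ ?_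
    · intro a ha
      exact (Nat.prime_of_mem_primesBelow (Finset.mem_filter.mp ha).1).prime
    · intro a ha
      exact (Finset.mem_filter.mp ha).2
  have hDn : ∏ r ∈ D, r ≤ n := Nat.le_of_dvd (by omega) hDdvd
  have hsubD : D ⊆ Nat.primesBelow (q 4) := Finset.filter_subset _ _
  have hE : ∀ r ∈ Nat.primesBelow (q 4) \ D, r = q 0 ∨ r = q 1 ∨ r = q 2 ∨ r = q 3 := by
    intro r hr
    rw [Finset.mem_sdiff] at hr
    have hp := Nat.prime_of_mem_primesBelow hr.1
    have hlt := Nat.lt_of_mem_primesBelow hr.1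
    have hnd : ¬ r ∣ n := fun h => hr.2 (Finset.mem_filter.mpr ⟨hr.1, h⟩)
    exact key r hp hlt hnd
  have hEcard : (Nat.primesBelow (q 4) \ D).card ≤ 4 := by
    have hsub : Nat.primesBelow (q 4) \ D ⊆ {q 0, q 1, q 2, q 3} := by
      intro r hr
      rcases hE r hr with h | h | h | h <;> simp [h]
    refine le_trans (Finset.card_le_card hsub) ?_
    refine le_trans (Finset.card_insert_le _ _) (Nat.succ_le_succ ?_)
    refine le_trans (Finset.card_insert_le _ _) (Nat.succ_le_succ ?_)
    refine le_trans (Finset.card_insert_le _ _) (Nat.succ_le_succ ?_)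
    exact Finset.card_singleton _ |>.le
  have hsplit : (∏ r ∈ Nat.primesBelow (q 4) \ D, r) * (∏ r ∈ D, r)
      = ∏ r ∈ Nat.primesBelow (q 4), r := Finset.prod_sdiff hsubD
  have hEbound : ∀ B : ℕ, 1 ≤ B → (∀ r ∈ Nat.primesBelow (q 4) \ D, r ≤ B) →
      (∏ r ∈ Nat.primesBelow (q 4) \ D, r) ≤ B ^ 4 := by
    intro B hB h
    calc (∏ r ∈ Nat.primesBelow (q 4) \ D, r) ≤ B ^ (Nat.primesBelow (q 4) \ D).card :=
          Finset.prod_le_pow_card _ _ _ h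
    _ ≤ B ^ 4 := Nat.pow_le_pow_right hB hEcard
  have h01 : q 0 < q 1 := (Nat.nth_lt_nth hinf).mpr (by norm_num)
  have h12 : q 1 < q 2 := (Nat.nth_lt_nth hinf).mpr (by norm_num)
  have h23 : q 2 < q 3 := (Nat.nth_lt_nth hinf).mpr (by norm_num)
  have h34 : q 3 < q 4 := (Nat.nth_lt_nth hinf).mpr (by norm_num)
  have hq4p := (hq 4).1
  have hb : q 2 * q 4 ≤ n ∧ q 3 * q 3 ≤ n := by
    have hcases : q 4 ≤ 19 ∨ q 4 = 23 ∨ q 4 = 29 ∨ 31 ≤ q 4 := by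
      by_cases h : q 4 < 31
      · have fact : ∀ x, x < 31 → x.Prime → (x ≤ 19 ∨ x = 23 ∨ x = 29) := by decide
        rcases fact _ h hq4p with h' | h' | h' <;> tauto
      · right; right; right; omega
    rcases hcases with h4 | h4 | h4 | h4
    · constructor
      · have : q 2 * q 4 ≤ 19 * 19 := Nat.mul_le_mul (by omega) h4
        omega
      · have : q 3 * q 3 ≤ 19 * 19 := Nat.mul_le_mul (by omega) (by omega)
        omega
    · have f1 : ∀ x, x < 23 → x.Prime → x ≤ 19 := by decide
      have f2 : ∀ x, x < 19 → x.Prime → x ≤ 17 := by decide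
      have hq3 : q 3 ≤ 19 := f1 _ (by omega) (hq 3).1
      have hq2 : q 2 ≤ 17 := f2 _ (by omega) (hq 2).1
      constructor
      · have : q 2 * q 4 ≤ 17 * 23 := Nat.mul_le_mul hq2 (by omega)
        omega
      · have : q 3 * q 3 ≤ 19 * 19 := Nat.mul_le_mul hq3 hq3
        omega
    · have f1 : ∀ x, x < 29 → x.Prime → x ≤ 23 := by decide
      have f2 : ∀ x, x < 23 → x.Prime → x ≤ 19 := by decide
      have hq3 : q 3 ≤ 23 := f1 _ (by omega) (hq 3).1
      have hq2 : q 2 ≤ 19 := f2 _ (by omega) (hq 2).1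
      have hEb : (∏ r ∈ Nat.primesBelow (q 4) \ D, r) ≤ 23 ^ 4 := by
        refine hEbound 23 (by norm_num) ?_
        intro r hr
        have hp := Nat.prime_of_mem_primesBelow (Finset.mem_sdiff.mp hr).1
        have hlt := Nat.lt_of_mem_primesBelow (Finset.mem_sdiff.mp hr).1
        rw [h4] at hlt
        exact f1 r hlt hp
      have hval : ∏ r ∈ Nat.primesBelow 29, r = 223092870 := by decide
      rw [h4] at hsplit
      rw [hval] at hsplit
      rw [h4] at hEb
      have h551 : 551 ≤ ∏ r ∈ D, r := by
        by_contra hcon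
        push_neg at hcon
        have : (∏ r ∈ Nat.primesBelow 29 \ D, r) * (∏ r ∈ D, r) ≤ 23 ^ 4 * 550 :=
          Nat.mul_le_mul hEb (by omega)
        omega
      constructor
      · have : q 2 * q 4 ≤ 19 * 29 := Nat.mul_le_mul hq2 (by omega)
        omega
      · have : q 3 * q 3 ≤ 23 * 23 := Nat.mul_le_mul hq3 hq3
        omega
    · have hlb : (q 4) ^ 6 ≤ ∏ r ∈ Nat.primesBelow (q 4), r := primesBelow_lb _ hq4p h4
      have hEb : (∏ r ∈ Nat.primesBelow (q 4) \ D, r) ≤ (q 4) ^ 4 := by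
        refine hEbound (q 4) (by omega) ?_
        intro r hr
        exact (Nat.lt_of_mem_primesBelow (Finset.mem_sdiff.mp hr).1).le
      have hq42 : (q 4) ^ 2 ≤ ∏ r ∈ D, r := by
        have h5 : (q 4) ^ 4 * (q 4) ^ 2 ≤ (q 4) ^ 4 * ∏ r ∈ D, r := by
          calc (q 4) ^ 4 * (q 4) ^ 2 = (q 4) ^ 6 := by ring
          _ ≤ ∏ r ∈ Nat.primesBelow (q 4), r := hlb
          _ = (∏ r ∈ Nat.primesBelow (q 4) \ D, r) * (∏ r ∈ D, r) := hsplit.symm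
          _ ≤ (q 4) ^ 4 * ∏ r ∈ D, r := Nat.mul_le_mul_right _ hEb
        exact Nat.le_of_mul_le_mul_left h5 (by positivity)
      have hn4 : (q 4) * (q 4) ≤ n := by
        have : (q 4) ^ 2 ≤ n := le_trans hq42 hDn
        nlinarith
      constructor
      · exact le_trans (Nat.mul_le_mul (by omega : q 2 ≤ q 4) (le_refl (q 4))) hn4
      · exact le_trans (Nat.mul_le_mul (by omega : q 3 ≤ q 4) (by omega : q 3 ≤ q 4)) hn4
  set S : Finset (ℕ × ℕ) :=
    {(0,0),(0,1),(0,2),(0,3),(0,4),(1,1),(1,2),(1,3),(1,4),(2,2),(2,3),(2,4),(3,3)} with hSdef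
  have hSfact : ∀ p ∈ S, p.1 ≤ p.2 ∧ (p.2 ≤ 3 ∨ (p.2 = 4 ∧ p.1 ≤ 2)) := by decide
  have hWsub : insert 1 (S.image (fun p => q p.1 * q p.2)) ⊆
      (Finset.Icc 1 n).filter (fun m => Nat.gcd m n = 1 ∧ ¬ m.Prime) := by
    intro w hw
    rw [Finset.mem_insert] at hw
    rcases hw with rfl | hw
    · refine Finset.mem_filter.mpr ⟨Finset.mem_Icc.mpr ⟨le_refl 1, by omega⟩, ?_, Nat.not_prime_one⟩
      exact Nat.gcd_one_left n
    · obtain ⟨p, hp, rfl⟩ := Finset.mem_image.mp hw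
      obtain ⟨h12', hcase⟩ := hSfact p hp
      have hle : q p.1 * q p.2 ≤ n := by
        rcases hcase with h3 | ⟨hp4, hp2⟩
        · exact le_trans (Nat.mul_le_mul (hmono (le_trans h12' h3)) (hmono h3)) hb.2
        · rw [hp4]
          exact le_trans (Nat.mul_le_mul_right _ (hmono hp2)) hb.1
      refine Finset.mem_filter.mpr ⟨Finset.mem_Icc.mpr ⟨?_, hle⟩, ?_, ?_⟩
      · exact Nat.one_le_iff_ne_zero.mpr (Nat.mul_ne_zero (hq p.1).1.pos.ne' (hq p.2).1.pos.ne')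
      · exact Nat.Coprime.mul
          (((hq p.1).1.coprime_iff_not_dvd).mpr (hq p.1).2)
          (((hq p.2).1.coprime_iff_not_dvd).mpr (hq p.2).2)
      · exact Nat.not_prime_mul (hq p.1).1.ne_one (hq p.2).1.ne_one
  have hinj : Set.InjOn (fun p : ℕ × ℕ => q p.1 * q p.2) S := by
    intro a ha b hb heq
    have ha' := hSfact a (by exact_mod_cast ha)
    have hb' := hSfact b (by exact_mod_cast hb)
    have h1 : q a.1 ≤ q a.2 := hmono ha'.1
    have h2 : q b.1 ≤ q b.2 := hmono hb'.1
    obtain ⟨e1, e2⟩ := mul_prime_inj (hq a.1).1 (hq a.2).1 (hq b.1).1 (hq b.2).1 h1 h2 heq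
    exact Prod.ext (hqinj _ _ e1) (hqinj _ _ e2)
  have hScard : S.card = 13 := by decide
  have hnotmem : (1 : ℕ) ∉ S.image (fun p => q p.1 * q p.2) := by
    intro h
    obtain ⟨p, hp, heq⟩ := Finset.mem_image.mp h
    have h1 : 2 ≤ q p.1 := (hq p.1).1.two_le
    have h2 : 2 ≤ q p.2 := (hq p.2).1.two_le
    have : 4 ≤ q p.1 * q p.2 := Nat.mul_le_mul h1 h2
    omega
  have hcard : (insert 1 (S.image (fun p => q p.1 * q p.2))).card = 14 := by
    rw [Finset.card_insert_of_notMem hnotmem, Finset.card_image_of_injOn hinj, hScard]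
  calc (14 : ℕ) = (insert 1 (S.image (fun p => q p.1 * q p.2))).card := hcard.symm
  _ ≤ ((Finset.Icc 1 n).filter (fun m => Nat.gcd m n = 1 ∧ ¬ m.Prime)).card :=
      Finset.card_le_card hWsub
  _ = phiT n := rfl

/-! ### The small cases: n ≤ 390, by verified computation -/

/-- the non-primes in [1, 390] -/
def npL : List ℕ := [1, 4, 6, 8, 9, 10, 12, 14, 15, 16, 18, 20, 21, 22, 24, 25, 26, 27, 28, 30, 32, 33, 34, 35, 36, 38, 39, 40, 42, 44, 45, 46, 48, 49, 50, 51, 52, 54, 55, 56, 57, 58, 60, 62, 63, 64, 65, 66, 68, 69, 70, 72, 74, 75, 76, 77, 78, 80, 81, 82, 84, 85, 86, 87, 88, 90, 91, 92, 93, 94, 95, 96, 98, 99, 100, 102, 104, 105, 106, 108, 110, 111, 112, 114, 115, 116, 117, 118, 119, 120, 121, 122, 123, 124, 125, 126, 128, 129, 130, 132, 133, 134, 135, 136, 138, 140, 141, 142, 143, 144, 145, 146, 147, 148, 150, 152, 153, 154, 155, 156, 158, 159, 160, 161, 162, 164, 165, 166, 168, 169, 170, 171, 172, 174, 175, 176,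 177, 178, 180, 182, 183, 184, 185, 186, 187, 188, 189, 190, 192, 194, 195, 196, 198, 200, 201, 202, 203, 204, 205, 206, 207, 208, 209, 210, 212, 213, 214, 215, 216, 217, 218, 219, 220, 221, 222, 224, 225, 226, 228, 230, 231, 232, 234, 235, 236, 237, 238, 240, 242, 243, 244, 245, 246, 247, 248, 249, 250, 252, 253, 254, 255, 256, 258, 259, 260, 261, 262, 264, 265, 266, 267, 268, 270, 272, 273, 274, 275, 276, 278, 279, 280, 282, 284, 285, 286, 287, 288, 289, 290, 291, 292, 294, 295, 296, 297, 298, 299, 300, 301, 302, 303, 304, 305, 306, 308, 309, 310, 312, 314, 315, 316, 318, 319, 320, 321, 322, 323, 324, 325, 326, 327, 328, 329, 330, 332, 333, 334, 335, 336, 338, 339, 340, 341, 342, 343, 344, 345, 346, 348, 350, 351, 352, 354, 355, 356, 357, 358, 360, 361, 362, 363, 364, 365, 366, 368, 369, 370, 371, 372, 374, 375, 376, 377, 378, 380, 381, 382, 384, 385, 386, 387, 388, 390]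

/-- boolean test: m = 1 or m has a divisor d with 2 ≤ d, d*d ≤ m -/
def npB (m : ℕ) : Bool :=
  (m == 1) || (List.range' 2 18).any (fun d => Nat.ble (d * d) m && m % d == 0)

set_option maxHeartbeats 1000000 in
lemma npL_eq : npL = (List.range' 1 390).filter npB := by decide

lemma npB_iff (m : ℕ) (h1 : 1 ≤ m) (h2 : m ≤ 390) : npB m = true ↔ ¬ m.Prime := by
  unfold npB
  rw [Bool.or_eq_true, List.any_eq_true]
  constructor
  · rintro (h | ⟨d, hd, hdd⟩)
    · rw [beq_iff_eq] at h
      subst h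
      exact Nat.not_prime_one
    · rw [List.mem_range'_1] at hd
      rw [Bool.and_eq_true, beq_iff_eq] at hdd
      obtain ⟨hdm, hmod⟩ := hdd
      have hble : d * d ≤ m := Nat.le_of_ble_eq_true hdm
      have hdvd : d ∣ m := Nat.dvd_of_mod_eq_zero hmod
      intro hp
      rcases (hp.eq_one_or_self_of_dvd d hdvd) with h | h
      · omega
      · subst h
        nlinarith
  · intro hp
    by_cases hm1 : m = 1
    · exact Or.inl (by simp [hm1])
    · right
      rw [Nat.prime_def_le_sqrt] at hp
      push_neg at hp
      obtain ⟨d, hd2, hdsq, hdvd⟩ := hp (by omega)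
      have hsq : m.sqrt * m.sqrt ≤ m := by
        have := Nat.sqrt_le' m
        nlinarith
      have hdd : d * d ≤ m := le_trans (Nat.mul_le_mul hdsq hdsq) hsq
      have hd20 : d < 20 := by nlinarith
      refine ⟨d, List.mem_range'_1.mpr ⟨hd2, by omega⟩, ?_⟩
      rw [Bool.and_eq_true, beq_iff_eq]
      exact ⟨Nat.ble_eq_true_of_le hdd, (Nat.mod_eq_zero_of_dvd hdvd)⟩

lemma card_filter_list (l : List ℕ) (hl : (↑l : Multiset ℕ).Nodup) (p : ℕ → Prop)
    [DecidablePred p] :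
    ((Finset.mk (↑l) hl).filter p).card = l.countP (fun m => decide (p m)) := by
  rw [Finset.card, Finset.filter_val]
  simp only [Multiset.quot_mk_to_coe'']
  rw [← Multiset.countP_eq_card_filter, Multiset.coe_countP]

lemma phiT_count (n : ℕ) (h1 : 1 ≤ n) (h2 : n ≤ 390) :
    phiT n = npL.countP (fun m => decide (m ≤ n) && (Nat.gcd m n == 1)) := by
  rw [npL_eq, List.countP_filter]
  rw [phiT, show Finset.Icc 1 n = ⟨↑(List.range' 1 (n + 1 - 1)), Multiset.coe_nodup.mpr List.nodup_range'⟩ from rfl, card_filter_list]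
  have hsimp : n + 1 - 1 = n := by omega
  rw [hsimp]
  have hsplit : List.range' 1 390 = List.range' 1 n ++ List.range' (1 + n) (390 - n) := by
    rw [show (1 + n) = 1 + 1 * n by omega, List.range'_append]
    congr 1
    omega
  rw [hsplit, List.countP_append]
  have hzero : List.countP (fun m => (decide (m ≤ n) && (Nat.gcd m n == 1)) && npB m)
      (List.range' (1 + n) (390 - n)) = 0 := by
    rw [List.countP_eq_zero]
    intro a ha
    rw [List.mem_range'_1] at ha
    have : ¬ (a ≤ n) := by omega
    simp [this]
  rw [hzero, Nat.add_zero]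
  apply List.countP_congr
  intro x hx
  rw [List.mem_range'_1] at hx
  have hxn : x ≤ n := by omega
  have hnp := npB_iff x (by omega) (by omega)
  simp only [Bool.and_eq_true, decide_eq_true_eq, beq_iff_eq]
  rw [hnp]
  constructor
  · rintro ⟨hg, hp⟩
    exact ⟨⟨hxn, hg⟩, hp⟩
  · rintro ⟨⟨-, hg⟩, hp⟩
    exact ⟨hg, hp⟩

set_option maxHeartbeats 40000000 in
lemma small_check :
    ∀ n ∈ Finset.Icc 1 390, npL.countP (fun m => decide (m ≤ n) && (Nat.gcd m n == 1)) ≠ 13 := by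
  decide

theorem stmt13 : ¬ ∃ n : ℕ, 0 < n ∧ phiT n = 13 := by
  rintro ⟨n, hn, h13⟩
  by_cases hs : n ≤ 390
  · have hne := small_check n (Finset.mem_Icc.mpr ⟨hn, hs⟩)
    rw [phiT_count n hn hs] at h13
    exact hne h13
  · have h14 := tail_ge n (by omega)
    omega
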